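/- Let L be a finite lattice expressed as a union of sublattices A₁, …, A_m, each containing the bounds o and i of L, such that any two distinct Aⱼ, A_k intersect exactly in {o, i}. If θ is an equivalence relation on L whose restriction to each Aⱼ is a congruence of Aⱼ having {o} and {i} as singleton blocks, and any two elements of L \ {o,i} lying in distinct components Aⱼ, A_k are complementary (their meet is o, their join is i), then θ is a congruence of L. -/

import Mathlib

set_option linter.unusedVariables false

/-- A lattice congruence: an equivalence relation compatible with `⊔` and `⊓`. -/
structure LatticeCongruence (L : Type*) [Lattice L] : Type _ where
  r : L → L → Prop
  refl : ∀ x, r x x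
  symm : ∀ {x y}, r x y → r y x
  trans : ∀ {x y z}, r x y → r y z → r x z
  sup : ∀ {a b c d}, r a b → r c d → r (a ⊔ c) (b ⊔ d)
  inf : ∀ {a b c d}, r a b → r c d → r (a ⊓ c) (b ⊓ d)

namespace LatticeCongruence

variable {L : Type*} [Lattice L]

theorem ext' {c d : LatticeCongruence L} (h : c.r = d.r) : c = d := by
  cases c; cases d; cases h; rfl

instance : PartialOrder (LatticeCongruence L) where
  le c d := ∀ x y, c.r x y → d.r x y
  le_refl _ _ _ h := h
  le_trans _ _ _ hab hbc x y h := hbc x y (hab x y h)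
  le_antisymm a b hab hba :=
    ext' (by funext x y; exact propext ⟨hab x y, hba x y⟩)

instance : InfSet (LatticeCongruence L) where
  sInf S :=
    { r := fun x y => ∀ c ∈ S, c.r x y
      refl := fun x c _ => c.refl x
      symm := fun h c hc => c.symm (h c hc)
      trans := fun h1 h2 c hc => c.trans (h1 c hc) (h2 c hc)
      sup := fun h1 h2 c hc => c.sup (h1 c hc) (h2 c hc)
      inf := fun h1 h2 c hc => c.inf (h1 c hc) (h2 c hc) }

/-- The complete lattice `Con L` of congruences of `L`. -/
instance : CompleteLattice (LatticeCongruence L) :=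
  completeLatticeOfInf _ fun S =>
    ⟨fun c hc x y h => h c hc, fun b hb x y h c hc => hb hc x y h⟩

end LatticeCongruence

/-- `latticeCon a b` is the principal congruence `con(a,b)`, the smallest congruence
collapsing `a` and `b`. -/
def latticeCon {L : Type*} [Lattice L] (a b : L) : LatticeCongruence L :=
  sInf {c : LatticeCongruence L | c.r a b}


/-- if a finite bounded lattice `L` is a union of `{⊥, ⊤}`-sublattices
pairwise intersecting in `{⊥, ⊤}`, and `θ` is an equivalence relation which holds only
within components, restricts to a congruence with singleton blocks `{⊥}` and `{⊤}` on each
component, and elements of distinct components (off the bounds) are complementary, then `θ`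
is a congruence of `L`. -/
theorem union_of_compatible_internal_congruences
    {L : Type*} [Lattice L] [Fintype L] [BoundedOrder L]
    {ι : Type*} (A : ι → Set L)
    (hsub : ∀ j, ∀ x ∈ A j, ∀ y ∈ A j, x ⊔ y ∈ A j ∧ x ⊓ y ∈ A j)
    (hbounds : ∀ j, (⊥ : L) ∈ A j ∧ (⊤ : L) ∈ A j)
    (hcover : ∀ x : L, ∃ j, x ∈ A j)
    (hinter : ∀ j k, j ≠ k → A j ∩ A k = {(⊥ : L), (⊤ : L)})
    (θ : L → L → Prop) (hequiv : Equivalence θ)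
    (hwithin : ∀ x y, θ x y → x = y ∨ ∃ j, x ∈ A j ∧ y ∈ A j)
    (hlocal : ∀ j, ∀ a ∈ A j, ∀ b ∈ A j, ∀ c ∈ A j, ∀ d ∈ A j,
      θ a b → θ c d → θ (a ⊔ c) (b ⊔ d) ∧ θ (a ⊓ c) (b ⊓ d))
    (hbot : ∀ x, θ x ⊥ → x = ⊥) (htop : ∀ x, θ x ⊤ → x = ⊤)
    (hcompl : ∀ j k, j ≠ k → ∀ x ∈ A j, ∀ y ∈ A k,
      x ≠ ⊥ → x ≠ ⊤ → y ≠ ⊥ → y ≠ ⊤ → x ⊓ y = ⊥ ∧ x ⊔ y = ⊤) :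
    ∃ c : LatticeCongruence L, ∀ x y, c.r x y ↔ θ x y := by
  -- Key one-sided lemma
  have key : ∀ a b c : L, θ a b → θ (a ⊔ c) (b ⊔ c) ∧ θ (a ⊓ c) (b ⊓ c) := by
    intro a b c hab
    by_cases hEq : a = b
    · subst hEq; exact ⟨hequiv.refl _, hequiv.refl _⟩
    · obtain ⟨j, haj, hbj⟩ := (hwithin a b hab).resolve_left hEq
      -- a, b are not ⊥ or ⊤
      have ha0 : a ≠ ⊥ := fun h => hEq (by
        subst h; exact (hbot b (hequiv.symm hab)).symm)
      have ha1 : a ≠ ⊤ := fun h => hEq (by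
        subst h; exact (htop b (hequiv.symm hab)).symm)
      have hb0 : b ≠ ⊥ := fun h => hEq (by subst h; exact hbot a hab)
      have hb1 : b ≠ ⊤ := fun h => hEq (by subst h; exact htop a hab)
      by_cases hcj : c ∈ A j
      · exact hlocal j a haj b hbj c hcj c hcj hab (hequiv.refl c)
      · obtain ⟨k, hck⟩ := hcover c
        have hjk : j ≠ k := fun h => hcj (h ▸ hck)
        have hc0 : c ≠ ⊥ := fun h => hcj (h ▸ (hbounds j).1)
        have hc1 : c ≠ ⊤ := fun h => hcj (h ▸ (hbounds j).2)
        obtain ⟨hai, has⟩ := hcompl j k hjk a haj c hck ha0 ha1 hc0 hc1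
        obtain ⟨hbi, hbs⟩ := hcompl j k hjk b hbj c hck hb0 hb1 hc0 hc1
        rw [hai, has, hbi, hbs]
        exact ⟨hequiv.refl _, hequiv.refl _⟩
  refine ⟨{ r := θ, refl := hequiv.refl, symm := hequiv.symm, trans := hequiv.trans,
            sup := ?_, inf := ?_ }, fun x y => Iff.rfl⟩
  · intro a b c d hab hcd
    have h1 := (key a b c hab).1
    have h2 := (key c d b hcd).1
    rw [sup_comm c b, sup_comm d b] at h2
    exact hequiv.trans h1 h2
  · intro a b c d hab hcd
    have h1 := (key a b c hab).2
    have h2 := (key c d b hcd).2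
    rw [inf_comm c b, inf_comm d b] at h2
    exact hequiv.trans h1 h2
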